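/- For a general linear quantum system the subspaces R_cō := Im(C_G) ∩ Ker(O_G), R_co := Im(C_G) ∩ Im(O_Gᴴ), R_c̄ō := Ker(C_Gᴴ) ∩ Ker(O_G) and R_c̄o := Ker(C_Gᴴ) ∩ Im(O_Gᴴ) satisfy R_cō = J_n · R_c̄o, R_co = J_n · R_co, and R_c̄ō = J_n · R_c̄ō, where J_n · S denotes the image of the subspace S under the linear map x ↦ J_n x. -/

import Mathlib

open Matrix

noncomputable section

/-- `J_k = [I 0; 0 -I]` acting on `ℂ^{2k} = ℂ^k ⊕ ℂ^k`. -/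
def Jmat (k : ℕ) : Matrix (Fin k ⊕ Fin k) (Fin k ⊕ Fin k) ℂ :=
  Matrix.fromBlocks 1 0 0 (-1)

/-- Entrywise complex conjugation of a matrix. -/
def mconj {α β : Type} (M : Matrix α β ℂ) : Matrix α β ℂ :=
  M.map (starRingEnd ℂ)

/-- The doubled-up matrix `Δ(U,V) = [U V; conj V  conj U]`. -/
def doubledUp {k r : ℕ} (U V : Matrix (Fin k) (Fin r) ℂ) :
    Matrix (Fin k ⊕ Fin k) (Fin r ⊕ Fin r) ℂ :=
  Matrix.fromBlocks U V (mconj V) (mconj U)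

/-- The ♭-adjoint `X♭ = J_r Xᴴ J_k` of `X ∈ ℂ^{2k×2r}`. -/
def flat {k r : ℕ} (X : Matrix (Fin k ⊕ Fin k) (Fin r ⊕ Fin r) ℂ) :
    Matrix (Fin r ⊕ Fin r) (Fin k ⊕ Fin k) ℂ :=
  Jmat r * Xᴴ * Jmat k

/-- Orthogonal complement of a subspace of `ℂ^ι` w.r.t. the standard Hermitian
inner product `⟪y, x⟫ = (star y) ⬝ᵥ x`. -/
def orthComp {ι : Type} [Fintype ι] (S : Submodule ℂ (ι → ℂ)) : Submodule ℂ (ι → ℂ) where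
  carrier := {x | ∀ y ∈ S, star y ⬝ᵥ x = 0}
  add_mem' := by
    intro a b ha hb y hy
    simp only [Set.mem_setOf_eq] at *
    rw [dotProduct_add, ha y hy, hb y hy, add_zero]
  zero_mem' := by
    intro y hy
    simp
  smul_mem' := by
    intro c x hx y hy
    simp only [Set.mem_setOf_eq] at *
    rw [dotProduct_smul, hx y hy, smul_zero]

/-- The controllable subspace `Im(C_G) = ∑_{k<2n} Im(𝒜ᵏℬ)`. -/
def ctrbSub (n m : ℕ) (𝒜 : Matrix (Fin n ⊕ Fin n) (Fin n ⊕ Fin n) ℂ)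
    (ℬ : Matrix (Fin n ⊕ Fin n) (Fin m ⊕ Fin m) ℂ) : Submodule ℂ (Fin n ⊕ Fin n → ℂ) :=
  ⨆ k ∈ Finset.range (2 * n), LinearMap.range ((𝒜 ^ k * ℬ).mulVecLin)

/-- The unobservable subspace `Ker(O_G) = ⋂_{k<2n} Ker(𝒞𝒜ᵏ)`. -/
def unobsSub (n m : ℕ) (𝒜 : Matrix (Fin n ⊕ Fin n) (Fin n ⊕ Fin n) ℂ)
    (𝒞 : Matrix (Fin m ⊕ Fin m) (Fin n ⊕ Fin n) ℂ) : Submodule ℂ (Fin n ⊕ Fin n → ℂ) :=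
  ⨅ k ∈ Finset.range (2 * n), LinearMap.ker ((𝒞 * 𝒜 ^ k).mulVecLin)
/-! ### Auxiliary lemmas -/

set_option linter.unusedSectionVars false

section Aux

variable {ι κ : Type} [Fintype ι] [Fintype κ] [DecidableEq ι] [DecidableEq κ]

lemma Jmat_mul_Jmat (k : ℕ) : Jmat k * Jmat k = 1 := by
  simp [Jmat, Matrix.fromBlocks_multiply, ← Matrix.fromBlocks_one]

lemma Jmat_conjTranspose (k : ℕ) : (Jmat k)ᴴ = Jmat k := by
  simp [Jmat, Matrix.fromBlocks_conjTranspose]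

lemma mem_orthComp {S : Submodule ℂ (ι → ℂ)} {x : ι → ℂ} :
    x ∈ orthComp S ↔ ∀ y ∈ S, star y ⬝ᵥ x = 0 := Iff.rfl

lemma star_mulVec_dotProduct (M : Matrix ι κ ℂ) (u : κ → ℂ) (x : ι → ℂ) :
    star (M *ᵥ u) ⬝ᵥ x = star u ⬝ᵥ (Mᴴ *ᵥ x) := by
  rw [Matrix.star_mulVec, ← Matrix.dotProduct_mulVec]

lemma star_dot_self_eq_zero {v : ι → ℂ} (h : star v ⬝ᵥ v = 0) : v = 0 := by
  have h2 : ∑ i, (Complex.normSq (v i) : ℂ) = 0 := by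
    rw [← h]
    simp only [dotProduct, Pi.star_apply]
    exact Finset.sum_congr rfl fun i _ => Complex.normSq_eq_conj_mul_self
  have h3 : ∑ i, Complex.normSq (v i) = 0 := by exact_mod_cast h2
  funext i
  have h4 := (Finset.sum_eq_zero_iff_of_nonneg
    (fun i _ => Complex.normSq_nonneg (v i))).mp h3 i (Finset.mem_univ i)
  exact Complex.normSq_eq_zero.mp h4

/-- The submodule `{y | star y ⬝ᵥ x = 0}`. -/
def dualKer (x : ι → ℂ) : Submodule ℂ (ι → ℂ) where
  carrier := {y | star y ⬝ᵥ x = 0}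
  add_mem' := by
    intro a b ha hb
    simp only [Set.mem_setOf_eq] at *
    rw [star_add, add_dotProduct, ha, hb, add_zero]
  zero_mem' := by simp
  smul_mem' := by
    intro c y hy
    simp only [Set.mem_setOf_eq] at *
    rw [star_smul, smul_dotProduct, hy, smul_zero]

lemma mem_orthComp_iff_le {S : Submodule ℂ (ι → ℂ)} {x : ι → ℂ} :
    x ∈ orthComp S ↔ S ≤ dualKer x := Iff.rfl

lemma orthComp_biSup (N : ℕ) (S : ℕ → Submodule ℂ (ι → ℂ)) :
    orthComp (⨆ k ∈ Finset.range N, S k) = ⨅ k ∈ Finset.range N, orthComp (S k) := by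
  ext x
  simp only [Submodule.mem_iInf, mem_orthComp_iff_le, iSup_le_iff]

lemma orthComp_range (M : Matrix ι κ ℂ) :
    orthComp (LinearMap.range M.mulVecLin) = LinearMap.ker (Mᴴ.mulVecLin) := by
  ext x
  simp only [mem_orthComp, LinearMap.mem_range, LinearMap.mem_ker,
    Matrix.mulVecLin_apply, forall_exists_index]
  constructor
  · intro h
    have h2 := h (M *ᵥ (Mᴴ *ᵥ x)) (Mᴴ *ᵥ x) rfl
    rw [star_mulVec_dotProduct] at h2
    exact star_dot_self_eq_zero h2
  · rintro h y u rfl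
    rw [star_mulVec_dotProduct, h, dotProduct_zero]

lemma inner_euclid (y z : ι → ℂ) :
    (inner ℂ ((WithLp.linearEquiv 2 ℂ (ι → ℂ)).symm y)
      ((WithLp.linearEquiv 2 ℂ (ι → ℂ)).symm z) : ℂ) = star y ⬝ᵥ z := by
  rw [PiLp.inner_apply]
  simp [RCLike.inner_apply, dotProduct, mul_comm]

/-- Identify `orthComp` with the euclidean orthogonal complement. -/
lemma orthComp_eq_orthogonal (S : Submodule ℂ (ι → ℂ)) :
    orthComp S = Submodule.comap (WithLp.linearEquiv 2 ℂ (ι → ℂ)).symm.toLinearMap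
      ((Submodule.map ((WithLp.linearEquiv 2 ℂ (ι → ℂ)).symm.toLinearMap) S :
        Submodule ℂ (EuclideanSpace ℂ ι))ᗮ) := by
  ext x
  simp only [mem_orthComp, Submodule.mem_comap, Submodule.mem_orthogonal,
    Submodule.mem_map, LinearEquiv.coe_coe, forall_exists_index, and_imp]
  constructor
  · rintro h u y hy rfl
    rw [inner_euclid]
    exact h y hy
  · intro h y hy
    have := h _ y hy rfl
    rwa [inner_euclid] at this

lemma orthComp_orthComp (S : Submodule ℂ (ι → ℂ)) : orthComp (orthComp S) = S := by
  rw [orthComp_eq_orthogonal (orthComp S), orthComp_eq_orthogonal S,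
    Submodule.map_comap_eq_of_surjective
      (f := (WithLp.linearEquiv 2 ℂ (ι → ℂ)).symm.toLinearMap)
      (WithLp.linearEquiv 2 ℂ (ι → ℂ)).symm.surjective,
    Submodule.orthogonal_orthogonal,
    Submodule.comap_map_eq_of_injective
      (f := (WithLp.linearEquiv 2 ℂ (ι → ℂ)).symm.toLinearMap)
      (WithLp.linearEquiv 2 ℂ (ι → ℂ)).symm.injective]

variable {M : Matrix ι ι ℂ}

lemma mem_map_invol (h1 : M * M = 1) {S : Submodule ℂ (ι → ℂ)} {x : ι → ℂ} :
    x ∈ S.map M.mulVecLin ↔ M *ᵥ x ∈ S := by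
  constructor
  · rintro ⟨y, hy, rfl⟩
    simpa [Matrix.mulVecLin_apply, Matrix.mulVec_mulVec, h1] using hy
  · intro h
    exact ⟨M *ᵥ x, h, by simp [Matrix.mulVecLin_apply, Matrix.mulVec_mulVec, h1]⟩

lemma map_map_invol (h1 : M * M = 1) (S : Submodule ℂ (ι → ℂ)) :
    (S.map M.mulVecLin).map M.mulVecLin = S := by
  ext x
  rw [mem_map_invol h1, mem_map_invol h1, Matrix.mulVec_mulVec, h1, Matrix.one_mulVec]

lemma orthComp_map_invol (h1 : M * M = 1) (hH : Mᴴ = M) (S : Submodule ℂ (ι → ℂ)) :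
    orthComp (S.map M.mulVecLin) = (orthComp S).map M.mulVecLin := by
  ext x
  rw [mem_map_invol h1, mem_orthComp, mem_orthComp]
  constructor
  · intro h y hy
    have := h (M *ᵥ y) ⟨y, hy, rfl⟩
    rwa [star_mulVec_dotProduct, hH] at this
  · rintro h z ⟨y, hy, rfl⟩
    rw [Matrix.mulVecLin_apply, star_mulVec_dotProduct, hH]
    exact h y hy

lemma conj_pow_invol (h1 : M * M = 1) (A : Matrix ι ι ℂ) (k : ℕ) :
    (M * A * M) ^ k = M * A ^ k * M := by
  have cancel : ∀ X : Matrix ι ι ℂ, M * (M * X) = X := fun X => by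
    rw [← mul_assoc, h1, one_mul]
  induction k with
  | zero => rw [pow_zero, pow_zero, Matrix.mul_one, h1]
  | succ k ih =>
    rw [pow_succ, ih, pow_succ]
    simp only [mul_assoc, cancel]

lemma feedback_pow (A : Matrix ι ι ℂ) (C : Matrix κ ι ℂ) (L : Matrix ι κ ℂ)
    (x : ι → ℂ) (N : ℕ) (h : ∀ k < N, C *ᵥ (A ^ k *ᵥ x) = 0) :
    ∀ k < N, (A + L * C) ^ k *ᵥ x = A ^ k *ᵥ x := by
  intro k hk
  induction k with
  | zero => simp
  | succ k ih =>
    have hk' : k < N := Nat.lt_of_succ_lt hk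
    rw [pow_succ', pow_succ', ← Matrix.mulVec_mulVec, ← Matrix.mulVec_mulVec,
      ih hk', Matrix.add_mulVec, ← Matrix.mulVec_mulVec (M := L) (N := C),
      h k hk', Matrix.mulVec_zero, add_zero]

lemma feedback_iff (A : Matrix ι ι ℂ) (C : Matrix κ ι ℂ) (L : Matrix ι κ ℂ)
    (x : ι → ℂ) (N : ℕ) :
    (∀ k < N, C *ᵥ (A ^ k *ᵥ x) = 0) ↔ (∀ k < N, C *ᵥ ((A + L * C) ^ k *ᵥ x) = 0) := by
  constructor
  · intro h k hk
    rw [feedback_pow A C L x N h k hk]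
    exact h k hk
  · intro h k hk
    have h2 := feedback_pow (A + L * C) C (-L) x N h k hk
    have hAL : A + L * C + -L * C = A := by
      rw [Matrix.neg_mul]; abel
    rw [hAL] at h2
    rw [h2]
    exact h k hk

end Aux

/-! ### The key identity -/

section Key

variable (n m : ℕ)
  (Ω : Matrix (Fin n ⊕ Fin n) (Fin n ⊕ Fin n) ℂ) (hΩH : Ω.IsHermitian)
  (𝒞 : Matrix (Fin m ⊕ Fin m) (Fin n ⊕ Fin n) ℂ)
  (𝒜 : Matrix (Fin n ⊕ Fin n) (Fin n ⊕ Fin n) ℂ)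
  (h𝒜 : 𝒜 = (-Complex.I) • (Jmat n * Ω) - (1 / 2 : ℂ) • (flat 𝒞 * 𝒞))
  (ℬ : Matrix (Fin n ⊕ Fin n) (Fin m ⊕ Fin m) ℂ) (hℬ : ℬ = -flat 𝒞)

include hΩH h𝒜 in
lemma flip_A : Jmat n * 𝒜ᴴ * Jmat n = -(𝒜 + flat 𝒞 * 𝒞) := by
  have hs : star (-Complex.I) = Complex.I := by
    simp [Complex.star_def, Complex.conj_I]
  have hhalf : star (1 / 2 : ℂ) = (1 / 2 : ℂ) := by
    simp [Complex.ext_iff]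
  have hfH : (flat 𝒞)ᴴ = Jmat m * 𝒞 * Jmat n := by
    rw [flat, Matrix.conjTranspose_mul, Matrix.conjTranspose_mul,
      Matrix.conjTranspose_conjTranspose, Jmat_conjTranspose, Jmat_conjTranspose, ← Matrix.mul_assoc]
  rw [h𝒜, Matrix.conjTranspose_sub, Matrix.conjTranspose_smul, Matrix.conjTranspose_smul,
    Matrix.conjTranspose_mul, Matrix.conjTranspose_mul, hfH, hΩH.eq, Jmat_conjTranspose,
    hs, hhalf]
  simp only [flat, Matrix.mul_sub, Matrix.sub_mul, Matrix.mul_smul, Matrix.smul_mul,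
    Matrix.mul_assoc, Jmat_mul_Jmat, Matrix.mul_one]
  module

include hΩH h𝒜 hℬ in
lemma key_matrix (k : ℕ) : (𝒜 ^ k * ℬ)ᴴ * Jmat n = (-1 : ℂ) ^ (k + 1) •
    (Jmat m * 𝒞 * (𝒜 + flat 𝒞 * 𝒞) ^ k) := by
  have hJ1 : Jmat n * Jmat n = 1 := Jmat_mul_Jmat n
  have hBJ : ℬᴴ * Jmat n = -(Jmat m * 𝒞) := by
    rw [hℬ, Matrix.conjTranspose_neg]
    simp only [flat, Matrix.conjTranspose_mul, Matrix.conjTranspose_conjTranspose,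
      Jmat_conjTranspose, Matrix.neg_mul, Matrix.mul_assoc, hJ1, Matrix.mul_one]
  have e1 : (𝒜ᴴ) ^ k * Jmat n = Jmat n * (Jmat n * 𝒜ᴴ * Jmat n) ^ k := by
    rw [conj_pow_invol hJ1, ← Matrix.mul_assoc, ← Matrix.mul_assoc, hJ1, one_mul]
  calc (𝒜 ^ k * ℬ)ᴴ * Jmat n
      = ℬᴴ * ((𝒜ᴴ) ^ k * Jmat n) := by
        rw [Matrix.conjTranspose_mul, Matrix.conjTranspose_pow, Matrix.mul_assoc]
    _ = (ℬᴴ * Jmat n) * (Jmat n * 𝒜ᴴ * Jmat n) ^ k := by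
        rw [e1, ← Matrix.mul_assoc]
    _ = -(Jmat m * 𝒞) * ((-1 : ℂ) ^ k • (𝒜 + flat 𝒞 * 𝒞) ^ k) := by
        rw [hBJ, flip_A n m Ω hΩH 𝒞 𝒜 h𝒜, ← neg_one_smul ℂ (𝒜 + flat 𝒞 * 𝒞), smul_pow]
    _ = (-1 : ℂ) ^ (k + 1) • (Jmat m * 𝒞 * (𝒜 + flat 𝒞 * 𝒞) ^ k) := by
        rw [Matrix.mul_smul, Matrix.neg_mul, smul_neg, ← neg_smul, pow_succ, mul_neg_one]

include hΩH h𝒜 hℬ in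
lemma key_subspace :
    unobsSub n m 𝒜 𝒞 = Submodule.map (Jmat n).mulVecLin (orthComp (ctrbSub n m 𝒜 ℬ)) := by
  have hJ1 : Jmat n * Jmat n = 1 := Jmat_mul_Jmat n
  have hJm1 : Jmat m * Jmat m = 1 := Jmat_mul_Jmat m
  ext x
  rw [mem_map_invol hJ1, ctrbSub, orthComp_biSup, unobsSub]
  simp only [orthComp_range, Submodule.mem_iInf, LinearMap.mem_ker,
    Matrix.mulVecLin_apply, Finset.mem_range, ← Matrix.mulVec_mulVec]
  rw [feedback_iff 𝒜 𝒞 (flat 𝒞) x (2 * n)]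
  refine forall₂_congr fun k _ => ?_
  rw [Matrix.mulVec_mulVec, Matrix.mulVec_mulVec, key_matrix n m Ω hΩH 𝒞 𝒜 h𝒜 ℬ hℬ k,
    Matrix.smul_mulVec, smul_eq_zero]
  have hne : ((-1 : ℂ) ^ (k + 1)) ≠ 0 := pow_ne_zero _ (by norm_num)
  simp only [hne, false_or]
  rw [Matrix.mul_assoc]
  simp only [← Matrix.mulVec_mulVec]
  constructor
  · intro h
    rw [h, Matrix.mulVec_zero]
  · intro h
    simpa [Matrix.mulVec_mulVec, ← Matrix.mul_assoc, hJm1] using congrArg (fun w => Jmat m *ᵥ w) h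

end Key
/-- **Lemma 2, Eq. (17).** For a general linear quantum system, the four Kalman
subspaces satisfy `R_cō = J_n·R_c̄o`, `R_co = J_n·R_co`, `R_c̄ō = J_n·R_c̄ō`. -/
theorem kalman_subspaces_Jn_relations
    (n m : ℕ) (hn : 0 < n) (hm : 0 < m)
    (Ωm Ωp : Matrix (Fin n) (Fin n) ℂ) (Cm Cp : Matrix (Fin m) (Fin n) ℂ)
    (Ω : Matrix (Fin n ⊕ Fin n) (Fin n ⊕ Fin n) ℂ) (hΩ : Ω = doubledUp Ωm Ωp)
    (hΩH : Ω.IsHermitian)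
    (𝒞 : Matrix (Fin m ⊕ Fin m) (Fin n ⊕ Fin n) ℂ) (h𝒞 : 𝒞 = doubledUp Cm Cp)
    (𝒜 : Matrix (Fin n ⊕ Fin n) (Fin n ⊕ Fin n) ℂ)
    (h𝒜 : 𝒜 = (-Complex.I) • (Jmat n * Ω) - (1 / 2 : ℂ) • (flat 𝒞 * 𝒞))
    (ℬ : Matrix (Fin n ⊕ Fin n) (Fin m ⊕ Fin m) ℂ) (hℬ : ℬ = -flat 𝒞)
    (Rcnoo : Submodule ℂ (Fin n ⊕ Fin n → ℂ))
    (hRcnoo : Rcnoo = ctrbSub n m 𝒜 ℬ ⊓ unobsSub n m 𝒜 𝒞)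
    (Rco : Submodule ℂ (Fin n ⊕ Fin n → ℂ))
    (hRco : Rco = ctrbSub n m 𝒜 ℬ ⊓ orthComp (unobsSub n m 𝒜 𝒞))
    (Rncnoo : Submodule ℂ (Fin n ⊕ Fin n → ℂ))
    (hRncnoo : Rncnoo = orthComp (ctrbSub n m 𝒜 ℬ) ⊓ unobsSub n m 𝒜 𝒞)
    (Rnco : Submodule ℂ (Fin n ⊕ Fin n → ℂ))
    (hRnco : Rnco = orthComp (ctrbSub n m 𝒜 ℬ) ⊓ orthComp (unobsSub n m 𝒜 𝒞)) :
    Rcnoo = Submodule.map (Jmat n).mulVecLin Rnco ∧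
    Rco = Submodule.map (Jmat n).mulVecLin Rco ∧
    Rncnoo = Submodule.map (Jmat n).mulVecLin Rncnoo := by
  have hJ1 : Jmat n * Jmat n = 1 := Jmat_mul_Jmat n
  have hJH : (Jmat n)ᴴ = Jmat n := Jmat_conjTranspose n
  set J := Jmat n with hJdef
  set C := ctrbSub n m 𝒜 ℬ with hC
  set U := unobsSub n m 𝒜 𝒞 with hU
  have key : U = Submodule.map J.mulVecLin (orthComp C) :=
    key_subspace n m Ω hΩH 𝒞 𝒜 h𝒜 ℬ hℬ
  have hinj : Function.Injective J.mulVecLin := by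
    intro a b hab
    have := congrArg (fun w => J *ᵥ w) hab
    simpa [Matrix.mulVecLin_apply, Matrix.mulVec_mulVec, hJ1] using this
  have hmapU : Submodule.map J.mulVecLin U = orthComp C := by
    rw [key, map_map_invol hJ1]
  have hmapOU : Submodule.map J.mulVecLin (orthComp U) = C := by
    rw [key, orthComp_map_invol hJ1 hJH, map_map_invol hJ1, orthComp_orthComp]
  have hmapC : Submodule.map J.mulVecLin C = orthComp U := by
    rw [key, orthComp_map_invol hJ1 hJH, orthComp_orthComp]
  have hmapOC : Submodule.map J.mulVecLin (orthComp C) = U := key.symm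
  refine ⟨?_, ?_, ?_⟩
  · rw [hRcnoo, hRnco, Submodule.map_inf _ hinj, hmapOC, hmapOU, inf_comm]
  · rw [hRco, Submodule.map_inf _ hinj, hmapC, hmapOU, inf_comm]
  · rw [hRncnoo, Submodule.map_inf _ hinj, hmapOC, hmapU, inf_comm]

end
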